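/- (Entry bounds for the context chain and its stationary distribution.) Under η-regularity of the Block MDP, every entry of the context chain kernel satisfies 1/(η³·n) ≤ P₀(y|x) ≤ η³/n for all x, y ∈ X (in particular all entries are positive, so the chain is irreducible and aperiodic), and every stationary distribution Π₀ of P₀ — i.e., every PMF Π₀ on X with Σ_x Π₀(x)·P₀(y|x) = Π₀(y) for all y — satisfies 1/(η³·n) ≤ Π₀(x) ≤ η³/n for all x ∈ X. -/
import Mathlib


open Finset

lemma ratio_sum_bounds {ι : Type*} (T : Finset ι) (g : ι → ℝ) (η : ℝ) (hη : 1 ≤ η)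
    (hsum : ∑ i ∈ T, g i = 1)
    (hrat : ∀ i ∈ T, ∀ j ∈ T, g i ≤ η * g j) {j : ι} (hj : j ∈ T) :
    1 / (η * T.card) ≤ g j ∧ g j ≤ η / T.card := by
  have hη0 : (0:ℝ) < η := lt_of_lt_of_le one_pos hη
  have hc : (0:ℝ) < T.card := by
    exact_mod_cast Finset.card_pos.mpr ⟨j, hj⟩
  constructor
  · rw [div_le_iff₀ (by positivity)]
    calc (1:ℝ) = ∑ i ∈ T, g i := hsum.symm
      _ ≤ ∑ _i ∈ T, η * g j := Finset.sum_le_sum fun i hi => hrat i hi j hj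
      _ = T.card * (η * g j) := by rw [Finset.sum_const, nsmul_eq_mul]
      _ = g j * (η * T.card) := by ring
  · rw [le_div_iff₀ hc]
    calc g j * T.card = ∑ _i ∈ T, g j := by rw [Finset.sum_const, nsmul_eq_mul]; ring
      _ ≤ ∑ i ∈ T, η * g i := Finset.sum_le_sum fun i hi => hrat j hj i hi
      _ = η * ∑ i ∈ T, g i := by rw [Finset.mul_sum]
      _ = η := by rw [hsum, mul_one]

/-- **Entry bounds for the context chain and its stationary distribution in a Block MDP.**
Here `p s a s'` is the latent transition probability `p(s'|s,a)`, `q s x` the emission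
probability `q(x|s)`, `π x a` the behavior-policy probability `π(a|x)`, and
`P0 x y = P₀(y|x) = Σ_a π(a|x)·q(y|f(y))·p(f(y)|f(x),a)` is the context chain kernel. -/
theorem blockMDP_context_chain_entry_bounds
    {X S A : Type*} [Fintype X] [Fintype S] [Fintype A]
    [Nonempty X] [Nonempty S] [Nonempty A] [DecidableEq S]
    (η : ℝ) (hη : 1 ≤ η)
    (f : X → S) (hf : Function.Surjective f)
    (p : S → A → S → ℝ) (hp : ∀ s a, (∀ s', 0 ≤ p s a s') ∧ ∑ s', p s a s' = 1)
    (q : S → X → ℝ)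
    (hq : ∀ s, (∀ x, 0 ≤ q s x) ∧ (∀ x, f x ≠ s → q s x = 0) ∧ ∑ x, q s x = 1)
    (pol : X → A → ℝ) (hpol : ∀ x, (∀ a, 0 ≤ pol x a) ∧ ∑ a, pol x a = 1)
    -- η-regularity (i): linear cluster sizes are comparable
    (hreg1 : ∀ s₁ s₂ : S,
      ((Finset.univ.filter fun x => f x = s₁).card : ℝ)
        ≤ η * ((Finset.univ.filter fun x => f x = s₂).card : ℝ))
    -- η-regularity (ii)
    (hreg2 : ∀ (s₁ s₂ s₃ : S) (a : A),
      p s₁ a s₂ ≤ η * p s₁ a s₃ ∧ p s₂ a s₁ ≤ η * p s₃ a s₁)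
    -- η-regularity (iii)
    (hreg3 : ∀ (s : S) (x y : X), f x = s → f y = s → q s x ≤ η * q s y)
    -- η-regularity (iv)
    (hreg4 : ∀ (x y : X) (a₁ a₂ : A), pol x a₁ ≤ η * pol y a₂)
    (P0 : X → X → ℝ)
    (hP0 : ∀ x y, P0 x y = ∑ a, pol x a * (q (f y) y * p (f x) a (f y))) :
    (∀ x y : X,
        1 / (η ^ 3 * (Fintype.card X : ℝ)) ≤ P0 x y
          ∧ P0 x y ≤ η ^ 3 / (Fintype.card X : ℝ))
    ∧ ∀ Pi0 : X → ℝ,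
        ((∀ x, 0 ≤ Pi0 x) ∧ ∑ x, Pi0 x = 1 ∧ ∀ y, ∑ x, Pi0 x * P0 x y = Pi0 y) →
        ∀ x : X,
          1 / (η ^ 3 * (Fintype.card X : ℝ)) ≤ Pi0 x
            ∧ Pi0 x ≤ η ^ 3 / (Fintype.card X : ℝ) := by
  classical
  have hη0 : (0:ℝ) < η := lt_of_lt_of_le one_pos hη
  set n : ℝ := (Fintype.card X : ℝ) with hn
  set k : ℝ := (Fintype.card S : ℝ) with hk
  have hn0 : (0:ℝ) < n := by rw [hn]; exact_mod_cast Fintype.card_pos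
  have hk0 : (0:ℝ) < k := by rw [hk]; exact_mod_cast Fintype.card_pos
  set m : S → ℝ := fun s => ((Finset.univ.filter fun x => f x = s).card : ℝ) with hm
  have hm0 : ∀ s, 0 < m s := by
    intro s
    obtain ⟨x, hx⟩ := hf s
    have hxm : x ∈ Finset.univ.filter fun x => f x = s := by simp [hx]
    have hc : 0 < (Finset.univ.filter fun x => f x = s).card := Finset.card_pos.mpr ⟨x, hxm⟩
    simp only [hm]
    exact_mod_cast hc
  have hmsum : ∑ s, m s = n := by
    have hcard : (Finset.univ : Finset X).card
        = ∑ s, (Finset.univ.filter fun x => f x = s).card :=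
      Finset.card_eq_sum_card_fiberwise (fun x _ => Finset.mem_univ (f x))
    rw [hn, ← Finset.card_univ, hcard]
    push_cast
    rfl
  have hmlow : ∀ s, n ≤ η * (k * m s) := by
    intro s
    calc n = ∑ s', m s' := hmsum.symm
      _ ≤ ∑ _s' : S, η * m s := Finset.sum_le_sum fun s' _ => hreg1 s' s
      _ = k * (η * m s) := by rw [Finset.sum_const, nsmul_eq_mul, hk]; rfl
      _ = η * (k * m s) := by ring
  have hmhigh : ∀ s, k * m s ≤ η * n := by
    intro s
    calc k * m s = ∑ _s' : S, m s := by rw [Finset.sum_const, nsmul_eq_mul, hk]; rfl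
      _ ≤ ∑ s', η * m s' := Finset.sum_le_sum fun s' _ => hreg1 s s'
      _ = η * ∑ s', m s' := by rw [Finset.mul_sum]
      _ = η * n := by rw [hmsum]
  -- entrywise bounds on p
  have hpb : ∀ s a s', 1 / (η * k) ≤ p s a s' ∧ p s a s' ≤ η / k := by
    intro s a s'
    have := ratio_sum_bounds Finset.univ (p s a) η hη (hp s a).2
      (fun i _ j _ => (hreg2 s i j a).1) (Finset.mem_univ s')
    simpa [hk, Finset.card_univ] using this
  -- entrywise bounds on q
  have hqb : ∀ y : X, 1 / (η * m (f y)) ≤ q (f y) y ∧ q (f y) y ≤ η / m (f y) := by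
    intro y
    have hsub : ∑ x ∈ Finset.univ.filter (fun x => f x = f y), q (f y) x = 1 := by
      rw [Finset.sum_filter_of_ne, (hq (f y)).2.2]
      intro x _ hx
      by_contra hfx
      exact hx ((hq (f y)).2.1 x hfx)
    have := ratio_sum_bounds (Finset.univ.filter (fun x => f x = f y)) (q (f y)) η hη hsub
      (fun i hi j hj => hreg3 (f y) i j (by simpa using hi) (by simpa using hj))
      (j := y) (by simp)
    simpa [hm] using this
  -- bounds on the products q(y|f y)·p(f y|f x, a)
  have hprod : ∀ (x y : X) (a : A),
      1 / (η ^ 3 * n) ≤ q (f y) y * p (f x) a (f y) ∧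
      q (f y) y * p (f x) a (f y) ≤ η ^ 3 / n := by
    intro x y a
    have h1 := hqb y
    have h2 := hpb (f x) a (f y)
    have hmy := hm0 (f y)
    constructor
    · calc 1 / (η ^ 3 * n) ≤ 1 / ((η * m (f y)) * (η * k)) := by
            apply one_div_le_one_div_of_le (by positivity)
            nlinarith [mul_le_mul_of_nonneg_left (hmhigh (f y)) (sq_nonneg η)]
        _ = 1 / (η * m (f y)) * (1 / (η * k)) := by
            rw [div_mul_div_comm, one_mul]
        _ ≤ q (f y) y * p (f x) a (f y) :=
            mul_le_mul h1.1 h2.1 (by positivity) ((hq (f y)).1 y)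
    · calc q (f y) y * p (f x) a (f y) ≤ (η / m (f y)) * (η / k) :=
            mul_le_mul h1.2 h2.2 ((hp (f x) a).1 (f y)) (by positivity)
        _ = (η * η) / (m (f y) * k) := by rw [div_mul_div_comm]
        _ ≤ η ^ 3 / n := by
            rw [div_le_div_iff₀ (by positivity) hn0]
            nlinarith [mul_le_mul_of_nonneg_left (hmlow (f y)) (sq_nonneg η)]
  have hP0b : ∀ x y, 1 / (η ^ 3 * n) ≤ P0 x y ∧ P0 x y ≤ η ^ 3 / n := by
    intro x y
    rw [hP0]
    constructor
    · calc 1 / (η ^ 3 * n) = ∑ a, pol x a * (1 / (η ^ 3 * n)) := by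
            rw [← Finset.sum_mul, (hpol x).2, one_mul]
        _ ≤ ∑ a, pol x a * (q (f y) y * p (f x) a (f y)) :=
            Finset.sum_le_sum fun a _ =>
              mul_le_mul_of_nonneg_left (hprod x y a).1 ((hpol x).1 a)
    · calc ∑ a, pol x a * (q (f y) y * p (f x) a (f y))
          ≤ ∑ a, pol x a * (η ^ 3 / n) :=
            Finset.sum_le_sum fun a _ =>
              mul_le_mul_of_nonneg_left (hprod x y a).2 ((hpol x).1 a)
        _ = η ^ 3 / n := by rw [← Finset.sum_mul, (hpol x).2, one_mul]
  refine ⟨hP0b, ?_⟩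
  rintro Pi0 ⟨hpos, hsum1, hstat⟩ x
  rw [← hstat x]
  constructor
  · calc 1 / (η ^ 3 * n)
        = ∑ z, Pi0 z * (1 / (η ^ 3 * n)) := by rw [← Finset.sum_mul, hsum1, one_mul]
      _ ≤ ∑ z, Pi0 z * P0 z x :=
          Finset.sum_le_sum fun z _ => mul_le_mul_of_nonneg_left (hP0b z x).1 (hpos z)
  · calc ∑ z, Pi0 z * P0 z x
        ≤ ∑ z, Pi0 z * (η ^ 3 / n) :=
          Finset.sum_le_sum fun z _ => mul_le_mul_of_nonneg_left (hP0b z x).2 (hpos z)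
      _ = η ^ 3 / n := by rw [← Finset.sum_mul, hsum1, one_mul]
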